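/- Let M, N ≥ 2 be integers and n := M²N². Let σ = Σ_{i=1}^{n} p_i (α_i α_iᴴ) ⊗ (β_i β_iᴴ), where p_i ≥ 0 with Σ_{i=1}^{n} p_i = 1 and α_i ∈ ℂ^M, β_i ∈ ℂ^N are unit vectors. Let p̃_i, α̃_i, β̃_i be p-bit truncations of p_i, α_i, β_i, and set σ̃ := Σ_{i=1}^{n} p̃_i (α̃_i α̃_iᴴ) ⊗ (β̃_i β̃_iᴴ). Then ‖σ − σ̃‖₂ < M³N³ · 2^{−(p−7.5)}. -/

import Mathlib

open Matrix
open scoped Kronecker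

noncomputable section

/-- `x` is a unit vector in `ℂ^d`. -/
def isUnitVec {d : ℕ} (x : Fin d → ℂ) : Prop := ∑ i, ‖x i‖ ^ 2 = 1

/-- The rank-one projector `x xᴴ`. -/
def outer {d : ℕ} (x : Fin d → ℂ) : Matrix (Fin d) (Fin d) ℂ :=
  Matrix.vecMulVec x (star x)

/-- `x'` is a `p`-bit truncation of the real number `x`. -/
def IsTruncR (p : ℕ) (x x' : ℝ) : Prop := |x'| ≤ |x| ∧ |x - x'| < (2 : ℝ) ^ (-(p : ℤ))

/-- `z'` is a `p`-bit truncation of the complex number `z` (real and imaginary parts are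
truncated separately). -/
def IsTruncC (p : ℕ) (z z' : ℂ) : Prop := IsTruncR p z.re z'.re ∧ IsTruncR p z.im z'.im

/-- `x'` is a coordinatewise `p`-bit truncation of the complex vector `x`. -/
def IsTruncVec {d : ℕ} (p : ℕ) (x x' : Fin d → ℂ) : Prop := ∀ i, IsTruncC p (x i) (x' i)

/-- The Frobenius (Hilbert–Schmidt) norm `‖X‖₂ = √tr(XᴴX)`. -/
def frob {m : Type*} [Fintype m] (X : Matrix m m ℂ) : ℝ :=
  Real.sqrt (∑ i, ∑ j, ‖X i j‖ ^ 2)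

/-! ### Auxiliary lemmas -/

attribute [local instance] Matrix.frobeniusSeminormedAddCommGroup
attribute [local instance] Matrix.frobeniusNormSMulClass

/-- The ℓ² norm of a vector. -/
def l2 {d : ℕ} (x : Fin d → ℂ) : ℝ := Real.sqrt (∑ i, ‖x i‖ ^ 2)

lemma l2_nonneg {d : ℕ} (x : Fin d → ℂ) : 0 ≤ l2 x := Real.sqrt_nonneg _

lemma frob_eq_norm {m : Type*} [Fintype m] (X : Matrix m m ℂ) : frob X = ‖X‖ := by
  rw [frob, Matrix.frobenius_norm_def, Real.sqrt_eq_rpow]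
  norm_num [Real.rpow_two]

lemma frob_nonneg {m : Type*} [Fintype m] (X : Matrix m m ℂ) : 0 ≤ frob X :=
  Real.sqrt_nonneg _

lemma frob_smul {m : Type*} [Fintype m] (c : ℂ) (X : Matrix m m ℂ) :
    frob (c • X) = ‖c‖ * frob X := by
  rw [frob_eq_norm, frob_eq_norm, norm_smul]

lemma frob_add_le {m : Type*} [Fintype m] (X Y : Matrix m m ℂ) :
    frob (X + Y) ≤ frob X + frob Y := by
  rw [frob_eq_norm, frob_eq_norm, frob_eq_norm]; exact norm_add_le _ _

lemma l2_star {d : ℕ} (x : Fin d → ℂ) : l2 (star x) = l2 x := by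
  simp [l2]

lemma frob_vecMulVec {d : ℕ} (x y : Fin d → ℂ) :
    frob (vecMulVec x y) = l2 x * l2 y := by
  rw [frob, l2, l2, ← Real.sqrt_mul (by positivity), Finset.sum_mul_sum]
  congr 1
  simp [vecMulVec_apply, mul_pow]

lemma frob_kron {m n : Type*} [Fintype m] [Fintype n] (A : Matrix m m ℂ) (B : Matrix n n ℂ) :
    frob (A ⊗ₖ B) = frob A * frob B := by
  rw [frob, frob, frob, ← Real.sqrt_mul (by positivity)]
  congr 1
  simp_rw [Fintype.sum_prod_type, kroneckerMap_apply, norm_mul, mul_pow,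
    Finset.sum_mul, Finset.mul_sum]
  refine Finset.sum_congr rfl fun i1 _ => ?_
  rw [Finset.sum_comm]

lemma normsq_eq (z : ℂ) : ‖z‖ ^ 2 = z.re ^ 2 + z.im ^ 2 := by
  rw [Complex.sq_norm, Complex.normSq_apply]; ring

lemma truncC_norm_le {p : ℕ} {z z' : ℂ} (h : IsTruncC p z z') : ‖z'‖ ≤ ‖z‖ := by
  obtain ⟨⟨h1, _⟩, ⟨h2, _⟩⟩ := h
  have := abs_nonneg z'.re
  have := abs_nonneg z'.im
  rw [← Real.sqrt_sq (norm_nonneg z'), ← Real.sqrt_sq (norm_nonneg z)]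
  refine Real.sqrt_le_sqrt ?_
  rw [normsq_eq, normsq_eq, ← sq_abs z.re, ← sq_abs z.im, ← sq_abs z'.re, ← sq_abs z'.im]
  gcongr

lemma truncC_sub_sq_le {p : ℕ} {z z' : ℂ} (h : IsTruncC p z z') :
    ‖z - z'‖ ^ 2 ≤ 2 * ((2 : ℝ) ^ (-(p : ℤ))) ^ 2 := by
  obtain ⟨⟨_, h1⟩, ⟨_, h2⟩⟩ := h
  rw [normsq_eq]
  have e1 : (z - z').re = z.re - z'.re := by simp
  have e2 : (z - z').im = z.im - z'.im := by simp
  rw [e1, e2]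
  have b1 : (z.re - z'.re) ^ 2 ≤ ((2 : ℝ) ^ (-(p : ℤ))) ^ 2 := by
    rw [← sq_abs]; exact pow_le_pow_left₀ (abs_nonneg _) h1.le 2
  have b2 : (z.im - z'.im) ^ 2 ≤ ((2 : ℝ) ^ (-(p : ℤ))) ^ 2 := by
    rw [← sq_abs]; exact pow_le_pow_left₀ (abs_nonneg _) h2.le 2
  linarith

lemma l2_eq_one {d : ℕ} {x : Fin d → ℂ} (hx : isUnitVec x) : l2 x = 1 := by
  rw [l2, hx, Real.sqrt_one]

lemma l2_trunc_le_one {d p : ℕ} {x x' : Fin d → ℂ} (hx : isUnitVec x)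
    (h : IsTruncVec p x x') : l2 x' ≤ 1 := by
  rw [l2, ← Real.sqrt_one]
  refine Real.sqrt_le_sqrt ?_
  rw [← hx]
  refine Finset.sum_le_sum fun i _ => ?_
  exact pow_le_pow_left₀ (norm_nonneg _) (truncC_norm_le (h i)) 2

lemma l2_trunc_sub_le {d p : ℕ} (hd : 2 ≤ d) {x x' : Fin d → ℂ}
    (h : IsTruncVec p x x') : l2 (x - x') ≤ (d : ℝ) * (2 : ℝ) ^ (-(p : ℤ)) := by
  have hε : (0 : ℝ) < (2 : ℝ) ^ (-(p : ℤ)) := by positivity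
  have hd' : (2 : ℝ) ≤ (d : ℝ) := by exact_mod_cast hd
  rw [l2]
  have hle : ∑ i, ‖(x - x') i‖ ^ 2 ≤ ((d : ℝ) * (2 : ℝ) ^ (-(p : ℤ))) ^ 2 := by
    calc ∑ i, ‖(x - x') i‖ ^ 2 ≤ ∑ _i : Fin d, 2 * ((2 : ℝ) ^ (-(p : ℤ))) ^ 2 :=
          Finset.sum_le_sum fun i _ => truncC_sub_sq_le (h i)
      _ = (d : ℝ) * (2 * ((2 : ℝ) ^ (-(p : ℤ))) ^ 2) := by
          rw [Finset.sum_const, Finset.card_univ, Fintype.card_fin, nsmul_eq_mul]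
      _ ≤ ((d : ℝ) * (2 : ℝ) ^ (-(p : ℤ))) ^ 2 := by nlinarith
  calc Real.sqrt (∑ i, ‖(x - x') i‖ ^ 2) ≤ Real.sqrt (((d : ℝ) * (2 : ℝ) ^ (-(p : ℤ))) ^ 2) :=
        Real.sqrt_le_sqrt hle
    _ = (d : ℝ) * (2 : ℝ) ^ (-(p : ℤ)) := Real.sqrt_sq (by positivity)

lemma outer_sub_decomp {d : ℕ} (x x' : Fin d → ℂ) :
    outer x - outer x' = vecMulVec x (star (x - x')) + vecMulVec (x - x') (star x') := by
  ext i j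
  simp only [outer, Matrix.sub_apply, Matrix.add_apply, vecMulVec_apply, Pi.star_apply,
    Pi.sub_apply, star_sub]
  ring

lemma frob_outer_sub_le {d p : ℕ} (hd : 2 ≤ d) {x x' : Fin d → ℂ} (hx : isUnitVec x)
    (h : IsTruncVec p x x') :
    frob (outer x - outer x') ≤ 2 * (d : ℝ) * (2 : ℝ) ^ (-(p : ℤ)) := by
  have hε : (0 : ℝ) < (2 : ℝ) ^ (-(p : ℤ)) := by positivity
  rw [outer_sub_decomp]
  calc frob _ ≤ frob (vecMulVec x (star (x - x'))) + frob (vecMulVec (x - x') (star x')) :=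
        frob_add_le _ _
    _ = l2 x * l2 (x - x') + l2 (x - x') * l2 x' := by
        rw [frob_vecMulVec, frob_vecMulVec, l2_star, l2_star]
    _ ≤ 1 * ((d : ℝ) * (2 : ℝ) ^ (-(p : ℤ))) + ((d : ℝ) * (2 : ℝ) ^ (-(p : ℤ))) * 1 :=
        add_le_add
          (mul_le_mul (l2_eq_one hx).le (l2_trunc_sub_le hd h) (l2_nonneg _) zero_le_one)
          (mul_le_mul (l2_trunc_sub_le hd h) (l2_trunc_le_one hx h) (l2_nonneg _)
            (by positivity))
    _ = 2 * (d : ℝ) * (2 : ℝ) ^ (-(p : ℤ)) := by ring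

lemma frob_outer_eq_one {d : ℕ} {x : Fin d → ℂ} (hx : isUnitVec x) : frob (outer x) = 1 := by
  rw [outer, frob_vecMulVec, l2_star, l2_eq_one hx, mul_one]

lemma frob_outer_trunc_le_one {d p : ℕ} {x x' : Fin d → ℂ} (hx : isUnitVec x)
    (h : IsTruncVec p x x') : frob (outer x') ≤ 1 := by
  rw [outer, frob_vecMulVec, l2_star]
  calc l2 x' * l2 x' ≤ 1 * 1 :=
        mul_le_mul (l2_trunc_le_one hx h) (l2_trunc_le_one hx h) (l2_nonneg _) zero_le_one
    _ = 1 := by ring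

/-- Truncation bound for separable decompositions: if `σ = Σ pᵢ (αᵢαᵢᴴ)⊗(βᵢβᵢᴴ)` and
`σ̃` is built from `p`-bit truncations of the data, then `‖σ − σ̃‖₂ < M³N³·2^{−(p−7.5)}`. -/
theorem sep_truncation_bound (M N p : ℕ) (hM : 2 ≤ M) (hN : 2 ≤ N) (hp : 1 ≤ p)
    (w w' : Fin (M ^ 2 * N ^ 2) → ℝ)
    (hw0 : ∀ i, 0 ≤ w i) (hw1 : ∑ i, w i = 1)
    (α α' : Fin (M ^ 2 * N ^ 2) → Fin M → ℂ)
    (β β' : Fin (M ^ 2 * N ^ 2) → Fin N → ℂ)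
    (hαu : ∀ i, isUnitVec (α i)) (hβu : ∀ i, isUnitVec (β i))
    (htw : ∀ i, IsTruncR p (w i) (w' i))
    (htα : ∀ i, IsTruncVec p (α i) (α' i))
    (htβ : ∀ i, IsTruncVec p (β i) (β' i)) :
    frob ((∑ i, (w i : ℂ) • (outer (α i) ⊗ₖ outer (β i))) -
          (∑ i, (w' i : ℂ) • (outer (α' i) ⊗ₖ outer (β' i))))
      < (M : ℝ) ^ 3 * (N : ℝ) ^ 3 * (2 : ℝ) ^ ((7.5 : ℝ) - (p : ℝ)) := by
  set ε : ℝ := (2 : ℝ) ^ (-(p : ℤ)) with hεdef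
  have hε : (0 : ℝ) < ε := by positivity
  have hM' : (2 : ℝ) ≤ (M : ℝ) := by exact_mod_cast hM
  have hN' : (2 : ℝ) ≤ (N : ℝ) := by exact_mod_cast hN
  -- per-index bounds
  have hw_le_one : ∀ i, w i ≤ 1 := by
    intro i
    rw [← hw1]
    exact Finset.single_le_sum (fun j _ => hw0 j) (Finset.mem_univ i)
  have hterm : ∀ i : Fin (M ^ 2 * N ^ 2),
      frob ((w i : ℂ) • (outer (α i) ⊗ₖ outer (β i)) -
            (w' i : ℂ) • (outer (α' i) ⊗ₖ outer (β' i)))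
        ≤ (1 + 2 * (M : ℝ) + 2 * (N : ℝ)) * ε := by
    intro i
    set A := outer (α i); set A' := outer (α' i); set B := outer (β i); set B' := outer (β' i)
    have hKsub : A ⊗ₖ B - A' ⊗ₖ B' = (A - A') ⊗ₖ B + A' ⊗ₖ (B - B') := by
      ext ⟨i1, i2⟩ ⟨j1, j2⟩
      simp only [Matrix.sub_apply, Matrix.add_apply, kroneckerMap_apply]
      ring
    have hAB1 : frob (A ⊗ₖ B) = 1 := by
      rw [frob_kron, frob_outer_eq_one (hαu i), frob_outer_eq_one (hβu i), mul_one]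
    have hbd : frob (A ⊗ₖ B - A' ⊗ₖ B') ≤ 2 * (M : ℝ) * ε + 2 * (N : ℝ) * ε := by
      rw [hKsub]
      calc frob _ ≤ frob ((A - A') ⊗ₖ B) + frob (A' ⊗ₖ (B - B')) := frob_add_le _ _
        _ = frob (A - A') * frob B + frob A' * frob (B - B') := by
            rw [frob_kron, frob_kron]
        _ ≤ (2 * (M : ℝ) * ε) * 1 + 1 * (2 * (N : ℝ) * ε) :=
            add_le_add
              (mul_le_mul (frob_outer_sub_le hM (hαu i) (htα i))
                (frob_outer_eq_one (hβu i)).le (frob_nonneg _) (by positivity))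
              (mul_le_mul (frob_outer_trunc_le_one (hαu i) (htα i))
                (frob_outer_sub_le hN (hβu i) (htβ i)) (frob_nonneg _) zero_le_one)
        _ = 2 * (M : ℝ) * ε + 2 * (N : ℝ) * ε := by ring
    have hw'le : |w' i| ≤ 1 := (htw i).1.trans (by rw [abs_of_nonneg (hw0 i)]; exact hw_le_one i)
    have hwd : |w i - w' i| ≤ ε := (htw i).2.le
    calc frob ((w i : ℂ) • (A ⊗ₖ B) - (w' i : ℂ) • (A' ⊗ₖ B'))
        = frob (((w i - w' i : ℝ) : ℂ) • (A ⊗ₖ B) + (w' i : ℂ) • (A ⊗ₖ B - A' ⊗ₖ B')) := by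
          congr 1
          push_cast
          module
      _ ≤ frob (((w i - w' i : ℝ) : ℂ) • (A ⊗ₖ B)) + frob ((w' i : ℂ) • (A ⊗ₖ B - A' ⊗ₖ B')) :=
          frob_add_le _ _
      _ = |w i - w' i| * frob (A ⊗ₖ B) + |w' i| * frob (A ⊗ₖ B - A' ⊗ₖ B') := by
          rw [frob_smul, frob_smul, Complex.norm_real, Complex.norm_real,
            Real.norm_eq_abs, Real.norm_eq_abs]
      _ ≤ ε * 1 + 1 * (2 * (M : ℝ) * ε + 2 * (N : ℝ) * ε) := by
          rw [hAB1]
          exact add_le_add (mul_le_mul_of_nonneg_right hwd zero_le_one)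
            (mul_le_mul hw'le hbd (frob_nonneg _) zero_le_one)
      _ = (1 + 2 * (M : ℝ) + 2 * (N : ℝ)) * ε := by ring
  -- sum up
  have hsum : frob ((∑ i, (w i : ℂ) • (outer (α i) ⊗ₖ outer (β i))) -
          (∑ i, (w' i : ℂ) • (outer (α' i) ⊗ₖ outer (β' i))))
      ≤ (M : ℝ) ^ 2 * (N : ℝ) ^ 2 * ((1 + 2 * (M : ℝ) + 2 * (N : ℝ)) * ε) := by
    rw [← Finset.sum_sub_distrib, frob_eq_norm]
    calc ‖∑ i, ((w i : ℂ) • (outer (α i) ⊗ₖ outer (β i)) -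
            (w' i : ℂ) • (outer (α' i) ⊗ₖ outer (β' i)))‖
        ≤ ∑ i, ‖(w i : ℂ) • (outer (α i) ⊗ₖ outer (β i)) -
            (w' i : ℂ) • (outer (α' i) ⊗ₖ outer (β' i))‖ := norm_sum_le _ _
      _ ≤ ∑ _i : Fin (M ^ 2 * N ^ 2), (1 + 2 * (M : ℝ) + 2 * (N : ℝ)) * ε := by
          refine Finset.sum_le_sum fun i _ => ?_
          rw [← frob_eq_norm]
          exact hterm i
      _ = (M : ℝ) ^ 2 * (N : ℝ) ^ 2 * ((1 + 2 * (M : ℝ) + 2 * (N : ℝ)) * ε) := by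
          rw [Finset.sum_const, Finset.card_univ, Fintype.card_fin, nsmul_eq_mul]
          push_cast
          ring
  have hrhs : (2 : ℝ) ^ ((7.5 : ℝ) - (p : ℝ)) = (2 : ℝ) ^ (7.5 : ℝ) * ε := by
    rw [Real.rpow_sub two_pos, hεdef]
    rw [_root_.zpow_neg, zpow_natCast, ← Real.rpow_natCast 2 p]
    rw [div_eq_mul_inv]
  have h128 : (128 : ℝ) ≤ (2 : ℝ) ^ (7.5 : ℝ) := by
    have : (2 : ℝ) ^ ((7 : ℕ) : ℝ) ≤ (2 : ℝ) ^ (7.5 : ℝ) :=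
      Real.rpow_le_rpow_of_exponent_le one_le_two (by norm_num)
    rw [Real.rpow_natCast] at this
    norm_num at this ⊢
    linarith
  have hfinal : (M : ℝ) ^ 2 * (N : ℝ) ^ 2 * ((1 + 2 * (M : ℝ) + 2 * (N : ℝ)) * ε)
      < (M : ℝ) ^ 3 * (N : ℝ) ^ 3 * ((2 : ℝ) ^ (7.5 : ℝ) * ε) := by
    have key : (1 + 2 * (M : ℝ) + 2 * (N : ℝ)) < (M : ℝ) * (N : ℝ) * (2 : ℝ) ^ (7.5 : ℝ) := by
      have hMN0 : (0 : ℝ) ≤ (M : ℝ) * (N : ℝ) := by positivity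
      nlinarith [h128, mul_le_mul_of_nonneg_left h128 hMN0,
        mul_nonneg (sub_nonneg.2 hM') (sub_nonneg.2 hN')]
    calc (M : ℝ) ^ 2 * (N : ℝ) ^ 2 * ((1 + 2 * (M : ℝ) + 2 * (N : ℝ)) * ε)
        < (M : ℝ) ^ 2 * (N : ℝ) ^ 2 * (((M : ℝ) * (N : ℝ) * (2 : ℝ) ^ (7.5 : ℝ)) * ε) := by
          have hMN : (0 : ℝ) < (M : ℝ) ^ 2 * (N : ℝ) ^ 2 := by positivity
          exact mul_lt_mul_of_pos_left (mul_lt_mul_of_pos_right key hε) hMN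
      _ = (M : ℝ) ^ 3 * (N : ℝ) ^ 3 * ((2 : ℝ) ^ (7.5 : ℝ) * ε) := by ring
  rw [hrhs]
  exact lt_of_le_of_lt hsum hfinal

end
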